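/- arXiv:2508.10153 — 2 statements merged into one kernel-verified Lean document; each statement's English description precedes it below -/
import Mathlib

section
/- Let A, B ∈ F₂[[q]] be odd. Then A + q and A + q² are units of F₂[[q]], and an element x ∈ F₂[[q]] satisfies T_{A,B}(T_{A,B}(x)) = x if and only if x ∈ {0, B·(A+q)⁻¹, B·(A+q²)⁻¹, q·B·(A+q²)⁻¹}. In particular, the unique 2-cycle of T_{A,B} is {B·(A+q²)⁻¹, q·B·(A+q²)⁻¹}. -/
open PowerSeries
open scoped Classical

/-- Shift map on `F₂[[q]]`: equals `x / q` whenever `q ∣ x`. -/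
noncomputable def divq (x : PowerSeries (ZMod 2)) : PowerSeries (ZMod 2) :=
  PowerSeries.mk fun n => PowerSeries.coeff (n + 1) x

/-- `T_{A,B}(x) = x/q` if `q ∣ x`, and `(A*x + B)/q` otherwise.  (When `A`, `B`, `x` are
all odd, `A*x + B` is divisible by `q`, so `divq` computes the true quotient there.) -/
noncomputable def Tab (A B x : PowerSeries (ZMod 2)) : PowerSeries (ZMod 2) :=
  if X ∣ x then divq x else divq (A * x + B)

lemma divq_X_mul (y : PowerSeries (ZMod 2)) : divq (X * y) = y := by
  ext n
  simp [divq, PowerSeries.coeff_succ_X_mul]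

lemma X_mul_divq (x : PowerSeries (ZMod 2)) (h : X ∣ x) : X * divq x = x := by
  obtain ⟨y, rfl⟩ := h
  rw [divq_X_mul]

lemma zmod2_eq_one {a : ZMod 2} (h : a ≠ 0) : a = 1 := by
  revert h; revert a; decide

lemma Tab_of_dvd (A B x : PowerSeries (ZMod 2)) (h : X ∣ x) : Tab A B x = divq x :=
  if_pos h

lemma Tab_of_not_dvd (A B x : PowerSeries (ZMod 2)) (h : ¬ X ∣ x) :
    Tab A B x = divq (A * x + B) :=
  if_neg h

lemma two_eq_zero' : (2 : PowerSeries (ZMod 2)) = 0 := by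
  rw [show (2:PowerSeries (ZMod 2)) = C 2 from (map_ofNat _ 2).symm]
  norm_num
  decide

/-- For odd `A, B`: `A + q` and `A + q²` are units of `F₂[[q]]`, and
`T_{A,B}(T_{A,B}(x)) = x` iff `x ∈ {0, B(A+q)⁻¹, B(A+q²)⁻¹, qB(A+q²)⁻¹}`.
In particular the unique 2-cycle of `T_{A,B}` is `{B(A+q²)⁻¹, qB(A+q²)⁻¹}`. -/
theorem Tab_two_periodic_points (A B : PowerSeries (ZMod 2))
    (hA : PowerSeries.constantCoeff A = 1)
    (hB : PowerSeries.constantCoeff B = 1) :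
    IsUnit (A + X) ∧ IsUnit (A + X ^ 2) ∧
    ∀ x : PowerSeries (ZMod 2), Tab A B (Tab A B x) = x ↔
      x ∈ ({0, B * (A + X)⁻¹, B * (A + X ^ 2)⁻¹, X * (B * (A + X ^ 2)⁻¹)} :
        Set (PowerSeries (ZMod 2))) := by
  have htwo : (2 : PowerSeries (ZMod 2)) = 0 := two_eq_zero'
  have hcu : PowerSeries.constantCoeff (A + X) = 1 := by
    simp [hA]
  have hcv : PowerSeries.constantCoeff (A + X ^ 2) = 1 := by
    simp [hA]
  have hu : IsUnit (A + X) := by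
    rw [PowerSeries.isUnit_iff_constantCoeff, hcu]; exact isUnit_one
  have hv : IsUnit (A + X ^ 2) := by
    rw [PowerSeries.isUnit_iff_constantCoeff, hcv]; exact isUnit_one
  have huu : (A + X) * (A + X)⁻¹ = 1 :=
    PowerSeries.mul_inv_cancel _ (by rw [hcu]; exact one_ne_zero)
  have hvv : (A + X ^ 2) * (A + X ^ 2)⁻¹ = 1 :=
    PowerSeries.mul_inv_cancel _ (by rw [hcv]; exact one_ne_zero)
  have hcui : PowerSeries.constantCoeff (A + X)⁻¹ = 1 := by
    rw [PowerSeries.constantCoeff_inv, hcu, inv_one]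
  have hcvi : PowerSeries.constantCoeff (A + X ^ 2)⁻¹ = 1 := by
    rw [PowerSeries.constantCoeff_inv, hcv, inv_one]
  refine ⟨hu, hv, fun x => ?_⟩
  -- key computations for the candidate points
  have key1 : A * (B * (A + X)⁻¹) + B = X * (B * (A + X)⁻¹) := by
    linear_combination B * huu + (B - X * B * (A + X)⁻¹) * htwo
  have key2 : A * (B * (A + X ^ 2)⁻¹) + B = X * (X * (B * (A + X ^ 2)⁻¹)) := by
    linear_combination B * hvv + (B - X ^ 2 * B * (A + X ^ 2)⁻¹) * htwo
  have hodd1 : ¬ X ∣ B * (A + X)⁻¹ := by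
    rw [PowerSeries.X_dvd_iff, map_mul, hB, hcui]; decide
  have hodd2 : ¬ X ∣ B * (A + X ^ 2)⁻¹ := by
    rw [PowerSeries.X_dvd_iff, map_mul, hB, hcvi]; decide
  have Tab2 : Tab A B (B * (A + X ^ 2)⁻¹) = X * (B * (A + X ^ 2)⁻¹) := by
    rw [Tab_of_not_dvd _ _ _ hodd2, key2, divq_X_mul]
  have Tab2' : Tab A B (X * (B * (A + X ^ 2)⁻¹)) = B * (A + X ^ 2)⁻¹ := by
    rw [Tab_of_dvd _ _ _ ⟨_, rfl⟩, divq_X_mul]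
  constructor
  · intro hTT
    simp only [Set.mem_insert_iff, Set.mem_singleton_iff]
    by_cases hx : X ∣ x
    · rw [Tab_of_dvd _ _ _ hx] at hTT
      have h1 : X * divq x = x := X_mul_divq x hx
      by_cases hx2 : X ∣ divq x
      · rw [Tab_of_dvd _ _ _ hx2] at hTT
        have h2 : X * divq (divq x) = divq x := X_mul_divq _ hx2
        rw [hTT] at h2
        -- x = X * (X * x)
        left
        have hz : x * (1 - X ^ 2) = 0 := by linear_combination -h1 - X * h2
        have hun : IsUnit ((1 : PowerSeries (ZMod 2)) - X ^ 2) := by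
          rw [PowerSeries.isUnit_iff_constantCoeff]
          simp
        rcases mul_eq_zero.mp hz with h | h
        · exact h
        · exact absurd h hun.ne_zero
      · rw [Tab_of_not_dvd _ _ _ hx2] at hTT
        have hcy : PowerSeries.constantCoeff (divq x) = 1 :=
          zmod2_eq_one (by rwa [PowerSeries.X_dvd_iff] at hx2)
        have heven : X ∣ A * divq x + B := by
          rw [PowerSeries.X_dvd_iff, map_add, map_mul, hA, hcy, hB]; decide
        have h2 : X * divq (A * divq x + B) = A * divq x + B := X_mul_divq _ heven
        rw [hTT] at h2
        have key : x * (A + X ^ 2) = X * B := by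
          linear_combination -A * h1 + X * h2 + A * X * divq x * htwo
        right; right; right
        linear_combination (A + X ^ 2)⁻¹ * key - x * hvv
    · rw [Tab_of_not_dvd _ _ _ hx] at hTT
      have hcx : PowerSeries.constantCoeff x = 1 :=
        zmod2_eq_one (by rwa [PowerSeries.X_dvd_iff] at hx)
      have heven1 : X ∣ A * x + B := by
        rw [PowerSeries.X_dvd_iff, map_add, map_mul, hA, hcx, hB]; decide
      have h1 : X * divq (A * x + B) = A * x + B := X_mul_divq _ heven1
      set y := divq (A * x + B) with hy_def
      by_cases hy : X ∣ y
      · rw [Tab_of_dvd _ _ _ hy] at hTT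
        have h2 : X * divq y = y := X_mul_divq _ hy
        rw [hTT] at h2
        have key : x * (A + X ^ 2) = B := by
          linear_combination -h1 + X * h2 + (X * y - B) * htwo
        right; right; left
        linear_combination (A + X ^ 2)⁻¹ * key - x * hvv
      · rw [Tab_of_not_dvd _ _ _ hy] at hTT
        have hcy : PowerSeries.constantCoeff y = 1 :=
          zmod2_eq_one (by rwa [PowerSeries.X_dvd_iff] at hy)
        have heven2 : X ∣ A * y + B := by
          rw [PowerSeries.X_dvd_iff, map_add, map_mul, hA, hcy, hB]; decide
        have h2 : X * divq (A * y + B) = A * y + B := X_mul_divq _ heven2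
        rw [hTT] at h2
        have hxy : (A + X) * (x - y) = 0 := by linear_combination h2 - h1
        have hyx : y = x := by
          rcases mul_eq_zero.mp hxy with h | h
          · exact absurd h hu.ne_zero
          · exact (sub_eq_zero.mp h).symm
        rw [hyx] at h1
        have key : x * (A + X) = B := by
          linear_combination -h1 + (X * x - B) * htwo
        right; left
        linear_combination (A + X)⁻¹ * key - x * huu
  · intro hx
    simp only [Set.mem_insert_iff, Set.mem_singleton_iff] at hx
    rcases hx with rfl | rfl | rfl | rfl
    · have h0 : divq 0 = 0 := by ext n; simp [divq]
      rw [Tab_of_dvd _ _ _ (dvd_zero _), h0, Tab_of_dvd _ _ _ (dvd_zero _), h0]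
    · rw [Tab_of_not_dvd _ _ _ hodd1, key1, divq_X_mul, Tab_of_not_dvd _ _ _ hodd1, key1, divq_X_mul]
    · rw [Tab2, Tab2']
    · rw [Tab2', Tab2]
end

section
/- An element x ∈ F₂[[q]] satisfies T_{1,1+q²}(x) = x if and only if x ∈ {0, 1+q}, and satisfies T_{1,1+q²}(T_{1,1+q²}(x)) = x if and only if x ∈ {0, 1+q, 1, q}. In particular, the unique 2-cycle of T_{1,1+q²} is {1, q} and its fixed points are 0 and 1+q. -/
open PowerSeries
open scoped Classical

lemma coeff_divq (x : PowerSeries (ZMod 2)) (n : ℕ) :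
    coeff n (divq x) = coeff (n + 1) x := by
  simp [divq]

lemma zmod2 (a : ZMod 2) : a = 0 ∨ a = 1 := by revert a; decide

lemma constantCoeff_divq (x : PowerSeries (ZMod 2)) :
    constantCoeff (divq x) = coeff 1 x := by
  rw [← coeff_zero_eq_constantCoeff]; exact coeff_divq x 0

lemma tail1 (x : PowerSeries (ZMod 2))
    (h2 : coeff 2 x = 0)
    (key : ∀ n, coeff (n + 3) x = coeff (n + 2) x) :
    ∀ n, coeff (n + 2) x = 0 := by
  intro n
  induction n with
  | zero => exact h2
  | succ n ih =>
    have e : n + 1 + 2 = n + 3 := by omega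
    rw [e, key]; exact ih

lemma tail2 (x : PowerSeries (ZMod 2))
    (h2 : coeff 2 x = 0) (h3 : coeff 3 x = 0)
    (key : ∀ n, coeff (n + 4) x = coeff (n + 2) x) :
    ∀ n, coeff (n + 2) x = 0 := by
  have H : ∀ n, coeff (n + 2) x = 0 ∧ coeff (n + 3) x = 0 := by
    intro n
    induction n with
    | zero => exact ⟨h2, h3⟩
    | succ n ih =>
      refine ⟨ih.2, ?_⟩
      have e : n + 1 + 3 = n + 4 := by omega
      rw [e, key]; exact ih.1
  exact fun n => (H n).1

lemma Tab_zero : Tab 1 (1 + X ^ 2) 0 = 0 := by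
  rw [Tab, if_pos (dvd_zero _)]
  ext n
  rw [coeff_divq]; simp

lemma not_X_dvd_one : ¬ (X : PowerSeries (ZMod 2)) ∣ 1 := by
  rw [X_dvd_iff]; simp

lemma not_X_dvd_one_add_X : ¬ (X : PowerSeries (ZMod 2)) ∣ (1 + X) := by
  rw [X_dvd_iff]; simp

lemma Tab_one : Tab 1 (1 + X ^ 2) 1 = X := by
  rw [Tab, if_neg not_X_dvd_one, one_mul]
  ext n
  rw [coeff_divq]
  rcases n with _ | _ | n <;>
    simp [coeff_one, coeff_X, coeff_X_pow]

lemma Tab_X : Tab 1 (1 + X ^ 2) X = 1 := by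
  rw [Tab, if_pos dvd_rfl]
  ext n
  rw [coeff_divq, coeff_X, coeff_one]
  rcases n with _ | n <;> norm_num

lemma Tab_one_add_X : Tab 1 (1 + X ^ 2) (1 + X) = 1 + X := by
  rw [Tab, if_neg not_X_dvd_one_add_X, one_mul]
  ext n
  rw [coeff_divq]
  rcases n with _ | _ | n <;>
    simp [coeff_one, coeff_X, coeff_X_pow]

/-- The fixed points of `T_{1,1+q²}` are exactly `0` and `1+q`, and the points of period
dividing 2 are exactly `0`, `1+q`, `1`, `q`; in particular the unique 2-cycle is `{1, q}`. -/
theorem Tab_one_periodic_points (x : PowerSeries (ZMod 2)) :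
    (Tab 1 (1 + X ^ 2) x = x ↔ x ∈ ({0, 1 + X} : Set (PowerSeries (ZMod 2)))) ∧
    (Tab 1 (1 + X ^ 2) (Tab 1 (1 + X ^ 2) x) = x ↔
      x ∈ ({0, 1 + X, 1, X} : Set (PowerSeries (ZMod 2)))) := by
  constructor
  · constructor
    · intro h
      simp only [Set.mem_insert_iff, Set.mem_singleton_iff]
      by_cases h0 : X ∣ x
      · left
        rw [Tab, if_pos h0] at h
        have key : ∀ n, coeff (n + 1) x = coeff n x := by
          intro n
          conv_rhs => rw [← h]
          rw [coeff_divq]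
        have c0 : coeff 0 x = 0 := by
          rw [coeff_zero_eq_constantCoeff]; exact X_dvd_iff.mp h0
        have all : ∀ n, coeff n x = 0 := by
          intro n
          induction n with
          | zero => exact c0
          | succ n ih => rw [key]; exact ih
        ext n
        rw [all n]; simp
      · right
        rw [Tab, if_neg h0, one_mul] at h
        have c0 : coeff 0 x = 1 := by
          rw [coeff_zero_eq_constantCoeff]
          rcases zmod2 (constantCoeff x) with hc | hc
          · exact absurd (X_dvd_iff.mpr hc) h0
          · exact hc
        have e : ∀ n, coeff n x =
            coeff (n + 1) x + (if n + 1 = 2 then 1 else 0) := by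
          intro n
          conv_lhs => rw [← h]
          rw [coeff_divq, map_add, map_add, coeff_one, if_neg (Nat.succ_ne_zero n),
            coeff_X_pow, zero_add]
        have c1 : coeff 1 x = 1 := by
          have := e 0
          rw [if_neg (by norm_num), add_zero] at this
          rw [← this]; exact c0
        have c2 : coeff 2 x = 0 := by
          have := e 1
          rw [if_pos rfl, c1] at this
          rcases zmod2 (coeff 2 x) with h2 | h2
          · exact h2
          · rw [h2] at this; exact absurd this (by decide)
        have key : ∀ n, coeff (n + 3) x = coeff (n + 2) x := by
          intro n
          have := e (n + 2)
          rw [if_neg (by omega), add_zero] at this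
          exact this.symm
        have tl := tail1 x c2 key
        ext n
        rcases n with _ | _ | n
        · rw [c0]; simp
        · rw [c1]; simp
        · rw [tl n]
          rw [map_add, coeff_one, coeff_X]
          norm_num
    · intro h
      simp only [Set.mem_insert_iff, Set.mem_singleton_iff] at h
      rcases h with rfl | rfl
      · exact Tab_zero
      · exact Tab_one_add_X
  · constructor
    · intro h
      simp only [Set.mem_insert_iff, Set.mem_singleton_iff]
      by_cases h0 : X ∣ x
      · have c0 : coeff 0 x = 0 := by
          rw [coeff_zero_eq_constantCoeff]; exact X_dvd_iff.mp h0
        rw [show Tab 1 (1 + X ^ 2) x = divq x from by rw [Tab, if_pos h0]] at h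
        by_cases h1 : X ∣ divq x
        · left
          rw [Tab, if_pos h1] at h
          have c1 : coeff 1 x = 0 := by
            rw [← constantCoeff_divq]; exact X_dvd_iff.mp h1
          have key : ∀ n, coeff (n + 2) x = coeff n x := by
            intro n
            conv_rhs => rw [← h]
            rw [coeff_divq, coeff_divq]
          have all : ∀ n, coeff n x = 0 ∧ coeff (n + 1) x = 0 := by
            intro n
            induction n with
            | zero => exact ⟨c0, c1⟩
            | succ n ih =>
              refine ⟨ih.2, ?_⟩
              have e : n + 1 + 1 = n + 2 := by omega
              rw [e, key]; exact ih.1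
          ext n
          rw [(all n).1]; simp
        · right; right; right
          rw [Tab, if_neg h1, one_mul] at h
          have c1 : coeff 1 x = 1 := by
            rcases zmod2 (coeff 1 x) with hc | hc
            · exact absurd (X_dvd_iff.mpr (by rw [constantCoeff_divq]; exact hc)) h1
            · exact hc
          have e : ∀ n, coeff n x =
              coeff (n + 2) x + (if n + 1 = 2 then 1 else 0) := by
            intro n
            conv_lhs => rw [← h]
            rw [coeff_divq, map_add, coeff_divq, map_add, coeff_one,
              if_neg (Nat.succ_ne_zero n), coeff_X_pow, zero_add]
          have c2 : coeff 2 x = 0 := by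
            have := e 0
            rw [if_neg (by norm_num), add_zero, c0] at this
            exact this.symm
          have c3 : coeff 3 x = 0 := by
            have := e 1
            rw [if_pos rfl, c1] at this
            rcases zmod2 (coeff 3 x) with h3 | h3
            · exact h3
            · rw [h3] at this; exact absurd this (by decide)
          have key : ∀ n, coeff (n + 4) x = coeff (n + 2) x := by
            intro n
            have := e (n + 2)
            rw [if_neg (by omega), add_zero] at this
            exact this.symm
          have tl := tail2 x c2 c3 key
          ext n
          rcases n with _ | _ | n
          · rw [c0, coeff_X]; norm_num
          · rw [c1, coeff_X]; norm_num
          · rw [tl n, coeff_X]; norm_num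
      · have c0 : coeff 0 x = 1 := by
          rw [coeff_zero_eq_constantCoeff]
          rcases zmod2 (constantCoeff x) with hc | hc
          · exact absurd (X_dvd_iff.mpr hc) h0
          · exact hc
        rw [show Tab 1 (1 + X ^ 2) x = divq (1 * x + (1 + X ^ 2)) from by
          rw [Tab, if_neg h0], one_mul] at h
        have hy : ∀ n, coeff n (divq (x + (1 + X ^ 2))) =
            coeff (n + 1) x + (if n + 1 = 2 then 1 else 0) := by
          intro n
          rw [coeff_divq, map_add, map_add, coeff_one, if_neg (Nat.succ_ne_zero n),
            coeff_X_pow, zero_add]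
        have hcy : constantCoeff (divq (x + (1 + X ^ 2))) =
            coeff 1 x := by
          rw [← coeff_zero_eq_constantCoeff, hy 0, if_neg (by norm_num), add_zero]
        by_cases h1 : X ∣ divq (x + (1 + X ^ 2))
        · right; right; left
          rw [Tab, if_pos h1] at h
          have c1 : coeff 1 x = 0 := by
            rw [← hcy]; exact X_dvd_iff.mp h1
          have e : ∀ n, coeff n x =
              coeff (n + 2) x + (if n + 2 = 2 then 1 else 0) := by
            intro n
            conv_lhs => rw [← h]
            rw [coeff_divq, hy (n + 1)]
          have c2 : coeff 2 x = 0 := by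
            have := e 0
            rw [if_pos rfl, c0] at this
            rcases zmod2 (coeff 2 x) with h2 | h2
            · exact h2
            · rw [h2] at this; exact absurd this (by decide)
          have c3 : coeff 3 x = 0 := by
            have := e 1
            rw [if_neg (by norm_num), add_zero, c1] at this
            exact this.symm
          have key : ∀ n, coeff (n + 4) x = coeff (n + 2) x := by
            intro n
            have := e (n + 2)
            rw [if_neg (by omega), add_zero] at this
            exact this.symm
          have tl := tail2 x c2 c3 key
          ext n
          rcases n with _ | _ | n
          · rw [c0, coeff_one]; norm_num
          · rw [c1, coeff_one]; norm_num
          · rw [tl n, coeff_one]; norm_num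
        · right; left
          rw [Tab, if_neg h1, one_mul] at h
          have c1 : coeff 1 x = 1 := by
            rcases zmod2 (coeff 1 x) with hc | hc
            · exact absurd (X_dvd_iff.mpr (by rw [hcy]; exact hc)) h1
            · exact hc
          have e : ∀ n, coeff n x =
              coeff (n + 2) x + (if n + 2 = 2 then 1 else 0)
                + (if n + 1 = 2 then 1 else 0) := by
            intro n
            conv_lhs => rw [← h]
            rw [coeff_divq, map_add, hy (n + 1), map_add, coeff_one,
              if_neg (Nat.succ_ne_zero n), coeff_X_pow, zero_add, add_assoc]
          have c2 : coeff 2 x = 0 := by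
            have := e 0
            rw [if_pos rfl, if_neg (by norm_num), add_zero, c0] at this
            rcases zmod2 (coeff 2 x) with h2 | h2
            · exact h2
            · rw [h2] at this; exact absurd this (by decide)
          have c3 : coeff 3 x = 0 := by
            have := e 1
            rw [if_neg (by norm_num), add_zero, if_pos rfl, c1] at this
            rcases zmod2 (coeff 3 x) with h3 | h3
            · exact h3
            · rw [h3] at this; exact absurd this (by decide)
          have key : ∀ n, coeff (n + 4) x = coeff (n + 2) x := by
            intro n
            have := e (n + 2)
            rw [if_neg (by omega), add_zero, if_neg (by omega), add_zero] at this
            exact this.symm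
          have tl := tail2 x c2 c3 key
          ext n
          rcases n with _ | _ | n
          · rw [c0, map_add, coeff_one, coeff_X]; norm_num
          · rw [c1, map_add, coeff_one, coeff_X]; norm_num
          · rw [tl n, map_add, coeff_one, coeff_X]; norm_num
    · intro h
      simp only [Set.mem_insert_iff, Set.mem_singleton_iff] at h
      rcases h with rfl | rfl | rfl | rfl
      · rw [Tab_zero, Tab_zero]
      · rw [Tab_one_add_X, Tab_one_add_X]
      · rw [Tab_one, Tab_X]
      · rw [Tab_X, Tab_one]
end
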